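/- arXiv:1111.0476 — 3 statements merged into one kernel-verified Lean document; each statement's English description precedes it below -/
import Mathlib

section
/- Let X be a compact topological space and let 𝓜 be a collection of clopen subsets of X containing ∅ and X and closed under binary unions and binary intersections (a sublattice of the clopen algebra). Then there exists a set E ⊆ X × X of 'equations' such that a clopen set A ⊆ X belongs to 𝓜 if and only if for every (u,v) ∈ E, u ∈ A implies v ∈ A. -/
theorem aux_inter {X : Type*} {𝓜 : Set (Set X)} (h1 : Set.univ ∈ 𝓜)
    (hi : ∀ A ∈ 𝓜, ∀ B ∈ 𝓜, A ∩ B ∈ 𝓜) {ι : Type*} (s : Finset ι) (f : ι → Set X)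
    (hf : ∀ i ∈ s, f i ∈ 𝓜) : (⋂ i ∈ s, f i) ∈ 𝓜 := by
  classical
  induction s using Finset.induction with
  | empty => simpa using h1
  | insert _ _ hx ih =>
    rw [Finset.set_biInter_insert]
    exact hi _ (hf _ (Finset.mem_insert_self _ _)) _
      (ih fun i hi' => hf _ (Finset.mem_insert_of_mem hi'))

theorem aux_union {X : Type*} {𝓜 : Set (Set X)} (h0 : ∅ ∈ 𝓜)
    (hu : ∀ A ∈ 𝓜, ∀ B ∈ 𝓜, A ∪ B ∈ 𝓜) {ι : Type*} (s : Finset ι) (f : ι → Set X)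
    (hf : ∀ i ∈ s, f i ∈ 𝓜) : (⋃ i ∈ s, f i) ∈ 𝓜 := by
  classical
  induction s using Finset.induction with
  | empty => simpa using h0
  | insert _ _ hx ih =>
    rw [Finset.set_biUnion_insert]
    exact hu _ (hf _ (Finset.mem_insert_self _ _)) _
      (ih fun i hi' => hf _ (Finset.mem_insert_of_mem hi'))

theorem stmt_0 {X : Type*} [TopologicalSpace X] [CompactSpace X]
    (𝓜 : Set (Set X)) (hcl : ∀ A ∈ 𝓜, IsClopen A)
    (h0 : ∅ ∈ 𝓜) (h1 : Set.univ ∈ 𝓜)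
    (hu : ∀ A ∈ 𝓜, ∀ B ∈ 𝓜, A ∪ B ∈ 𝓜)
    (hi : ∀ A ∈ 𝓜, ∀ B ∈ 𝓜, A ∩ B ∈ 𝓜) :
    ∃ E : Set (X × X), ∀ A : Set X, IsClopen A →
      (A ∈ 𝓜 ↔ ∀ p ∈ E, p.1 ∈ A → p.2 ∈ A) := by
  classical
  refine ⟨{p | ∀ B ∈ 𝓜, p.1 ∈ B → p.2 ∈ B}, fun A hA => ⟨fun hAM p hp hp1 => hp A hAM hp1,
    fun hE => ?_⟩⟩
  -- Step 1: every u ∈ A has B ∈ 𝓜 with u ∈ B ⊆ A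
  have key : ∀ u ∈ A, ∃ B ∈ 𝓜, u ∈ B ∧ B ⊆ A := by
    intro u hu'
    have hAc : IsCompact Aᶜ := (hA.isOpen.isClosed_compl).isCompact
    -- index type: members of 𝓜 containing u
    have hcover : Aᶜ ⊆ ⋃ B : {B : Set X // B ∈ 𝓜 ∧ u ∈ B}, (B : Set X)ᶜ := by
      intro v hv
      have : ¬ (∀ B ∈ 𝓜, u ∈ B → v ∈ B) := fun h => hv (hE (u, v) h hu')
      push_neg at this
      obtain ⟨B, hB, huB, hvB⟩ := this
      exact Set.mem_iUnion.mpr ⟨⟨B, hB, huB⟩, hvB⟩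
    obtain ⟨t, ht⟩ := hAc.elim_finite_subcover _
      (fun B : {B : Set X // B ∈ 𝓜 ∧ u ∈ B} => (hcl B B.2.1).isClosed.isOpen_compl) hcover
    refine ⟨⋂ B ∈ t, (B : Set X), aux_inter h1 hi t _ (fun B _ => B.2.1), ?_, ?_⟩
    · exact Set.mem_biInter fun B _ => B.2.2
    · intro x hx
      by_contra hxA
      obtain ⟨B, hBt, hxB⟩ := Set.mem_iUnion₂.mp (ht hxA)
      exact hxB (Set.biInter_subset_of_mem hBt hx)
  choose! g hg1 hg2 hg3 using key
  have hAcomp : IsCompact A := hA.isClosed.isCompact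
  have hcov2 : A ⊆ ⋃ u : A, g u := fun x hx =>
    Set.mem_iUnion.mpr ⟨⟨x, hx⟩, hg2 x hx⟩
  obtain ⟨t, ht⟩ := hAcomp.elim_finite_subcover (fun u : A => g u)
    (fun u => (hcl _ (hg1 u u.2)).isOpen) hcov2
  have : A = ⋃ u ∈ t, g u := by
    apply Set.Subset.antisymm ht
    exact Set.iUnion₂_subset fun u _ => hg3 u u.2
  rw [this]
  exact aux_union h0 hu t _ (fun u _ => hg1 u u.2)
end

section
/- Let X be a compact space with clopen basis and D ⊆ X dense. A family 𝓜 of 'regular' subsets of D (i.e., sets of the form U ∩ D with U clopen in X) contains ∅ and D and is closed under binary unions and intersections if and only if there exists a set E ⊆ X × X such that a regular language L ∈ 𝓜 iff for every (u,v) ∈ E, u ∈ closure(L) implies v ∈ closure(L). -/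
open Set

private lemma clo_aux {X : Type*} [TopologicalSpace X] {D U : Set X} (hD : Dense D)
    (hU : IsClopen U) : closure (U ∩ D) = U := by
  apply subset_antisymm
  · exact (closure_mono inter_subset_left).trans (le_of_eq hU.isClosed.closure_eq)
  · intro x hx
    rw [mem_closure_iff]
    intro o ho hxo
    rcases hD.inter_open_nonempty (o ∩ U) (ho.inter hU.isOpen) ⟨x, hxo, hx⟩ with
      ⟨y, ⟨hyo, hyU⟩, hyD⟩
    exact ⟨y, hyo, hyU, hyD⟩

theorem stmt_11 {X : Type*} [TopologicalSpace X] [CompactSpace X]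
    (hbasis : TopologicalSpace.IsTopologicalBasis {U : Set X | IsClopen U})
    (D : Set X) (hD : Dense D)
    (𝓜 : Set (Set X)) (h𝓜 : ∀ L ∈ 𝓜, ∃ U : Set X, IsClopen U ∧ L = U ∩ D) :
    ((∅ ∈ 𝓜 ∧ D ∈ 𝓜 ∧ ∀ A ∈ 𝓜, ∀ B ∈ 𝓜, A ∪ B ∈ 𝓜 ∧ A ∩ B ∈ 𝓜) ↔
      ∃ E : Set (X × X), ∀ L : Set X, (∃ U : Set X, IsClopen U ∧ L = U ∩ D) →
        (L ∈ 𝓜 ↔ ∀ p ∈ E, p.1 ∈ closure L → p.2 ∈ closure L)) := by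
  have hcl : ∀ M ∈ 𝓜, IsClopen (closure M) ∧ M = closure M ∩ D := by
    intro M hM
    obtain ⟨U, hU, rfl⟩ := h𝓜 M hM
    rw [clo_aux hD hU]
    exact ⟨hU, rfl⟩
  constructor
  · rintro ⟨hempty, hDmem, hlat⟩
    refine ⟨{p | ∀ M ∈ 𝓜, p.1 ∈ closure M → p.2 ∈ closure M}, ?_⟩
    rintro L ⟨U, hU, rfl⟩
    rw [clo_aux hD hU]
    constructor
    · intro hL p hp hp1
      have h := hp _ hL
      rw [clo_aux hD hU] at h
      exact h hp1
    · intro hE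
      have hUnion : ∀ {ι : Type _} (s : Finset ι) (f : ι → Set X),
          (∀ i ∈ s, f i ∈ 𝓜) → (⋃ i ∈ s, f i) ∈ 𝓜 := by
        intro ι s f
        classical
        induction s using Finset.induction_on with
        | empty => intro _; simpa using hempty
        | insert _ _ ha ih =>
          intro h
          rw [Finset.set_biUnion_insert]
          exact (hlat _ (h _ (Finset.mem_insert_self _ _)) _
            (ih fun i hi => h i (Finset.mem_insert_of_mem hi))).1
      have hInter : ∀ {ι : Type _} (s : Finset ι) (f : ι → Set X),
          (∀ i ∈ s, f i ∈ 𝓜) → (D ∩ ⋂ i ∈ s, f i) ∈ 𝓜 := by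
        intro ι s f
        classical
        induction s using Finset.induction_on with
        | empty => intro _; simpa using hDmem
        | insert _ _ ha ih =>
          intro h
          rw [Finset.set_biInter_insert, inter_left_comm]
          exact (hlat _ (h _ (Finset.mem_insert_self _ _)) _
            (ih fun i hi => h i (Finset.mem_insert_of_mem hi))).2
      have key : ∀ v ∉ U, ∃ N ∈ 𝓜, U ⊆ closure N ∧ v ∉ closure N := by
        intro v hv
        set ι := {M : Set X // M ∈ 𝓜 ∧ v ∉ closure M}
        have hcov : U ⊆ ⋃ i : ι, closure i.1 := by
          intro u hu
          by_contra hcontra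
          have : ∀ M ∈ 𝓜, u ∈ closure M → v ∈ closure M := by
            intro M hM huM
            by_contra hvM
            exact hcontra (mem_iUnion.2 ⟨⟨M, hM, hvM⟩, huM⟩)
          exact hv (hE (u, v) this hu)
        obtain ⟨s, hs⟩ := hU.isClosed.isCompact.elim_finite_subcover
          (fun i : ι => closure i.1) (fun i => (hcl i.1 i.2.1).1.isOpen) hcov
        refine ⟨⋃ i ∈ s, i.1, hUnion s _ (fun i _ => i.2.1), ?_, ?_⟩
        · rw [Finset.closure_biUnion]; exact hs
        · rw [Finset.closure_biUnion]
          simp only [mem_iUnion, not_exists]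
          exact fun i _ => i.2.2
      classical
      set ι' := {N : Set X // N ∈ 𝓜 ∧ U ⊆ closure N}
      have hcov' : Uᶜ ⊆ ⋃ i : ι', (closure i.1)ᶜ := by
        intro v hv
        obtain ⟨N, hN, hUN, hvN⟩ := key v hv
        exact mem_iUnion.2 ⟨⟨N, hN, hUN⟩, hvN⟩
      obtain ⟨s, hs⟩ := (hU.isOpen.isClosed_compl).isCompact.elim_finite_subcover
        (fun i : ι' => (closure i.1)ᶜ) (fun i => (hcl i.1 i.2.1).1.isClosed.isOpen_compl) hcov'
      have hUeq : (⋂ i ∈ s, closure i.1) = U := by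
        apply subset_antisymm
        · intro x hx
          by_contra hxU
          obtain ⟨i, his, hxi⟩ := by simpa using hs hxU
          exact hxi (by simpa using (mem_iInter₂.1 hx) i his)
        · intro x hx
          exact mem_iInter₂.2 fun i _ => i.2.2 hx
      have heq : U ∩ D = D ∩ ⋂ i ∈ s, i.1 := by
        ext x
        simp only [mem_inter_iff, mem_iInter]
        constructor
        · rintro ⟨hxU, hxD⟩
          refine ⟨hxD, fun i hi => ?_⟩
          rw [(hcl i.1 i.2.1).2]
          exact ⟨i.2.2 hxU, hxD⟩
        · rintro ⟨hxD, hx⟩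
          refine ⟨?_, hxD⟩
          have hxc : x ∈ ⋂ i ∈ s, closure i.1 :=
            mem_iInter₂.2 fun i hi => subset_closure (hx i hi)
          rw [hUeq] at hxc
          exact hxc
      rw [heq]
      exact hInter s _ fun i _ => i.2.1
  · rintro ⟨E, hach⟩
    have hsat : ∀ L ∈ 𝓜, ∀ p ∈ E, p.1 ∈ closure L → p.2 ∈ closure L := by
      intro L hL
      exact (hach L (h𝓜 L hL)).1 hL
    refine ⟨?_, ?_, ?_⟩
    · exact (hach ∅ ⟨∅, isClopen_empty, by simp⟩).2 (by simp)
    · refine (hach D ⟨univ, isClopen_univ, by simp⟩).2 ?_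
      intro p _ _
      rw [hD.closure_eq]
      trivial
    · intro A hA B hB
      obtain ⟨UA, hUA, rfl⟩ := h𝓜 A hA
      obtain ⟨UB, hUB, rfl⟩ := h𝓜 B hB
      constructor
      · refine (hach _ ⟨UA ∪ UB, hUA.union hUB,
          by rw [union_inter_distrib_right]⟩).2 ?_
        intro p hp h1
        rw [closure_union] at h1 ⊢
        rcases h1 with h | h
        · exact Or.inl (hsat _ hA p hp h)
        · exact Or.inr (hsat _ hB p hp h)
      · have hinter : UA ∩ D ∩ (UB ∩ D) = (UA ∩ UB) ∩ D := by
          ext x; simp only [mem_inter_iff]; tauto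
        refine (hach _ ⟨UA ∩ UB, hUA.inter hUB, hinter⟩).2 ?_
        intro p hp h1
        rw [hinter, clo_aux hD (hUA.inter hUB)] at h1 ⊢
        have h1A := hsat _ hA p hp (by rw [clo_aux hD hUA]; exact h1.1)
        have h1B := hsat _ hB p hp (by rw [clo_aux hD hUB]; exact h1.2)
        rw [clo_aux hD hUA] at h1A
        rw [clo_aux hD hUB] at h1B
        exact ⟨h1A, h1B⟩
end

section
/- Let X be a compact space with clopen basis and D ⊆ X dense. A family 𝓜 of regular subsets of D (sets U ∩ D with U clopen in X) is a Boolean subalgebra (contains ∅ and D, closed under finite unions, intersections, and complements in D) if and only if there exists a symmetric set E ⊆ X × X such that L ∈ 𝓜 iff for every (u,v) ∈ E, u ∈ closure(L) ↔ v ∈ closure(L). -/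
open Set

lemma stmt12_closure {X : Type*} [TopologicalSpace X] {D : Set X} (hD : Dense D)
    {U : Set X} (hU : IsClopen U) : closure (U ∩ D) = U := by
  apply subset_antisymm
  · calc closure (U ∩ D) ⊆ closure U := closure_mono inter_subset_left
      _ = U := hU.isClosed.closure_eq
  · exact hD.open_subset_closure_inter hU.isOpen

lemma stmt12_key {X : Type*} [TopologicalSpace X] [CompactSpace X]
    (𝓑 : Set (Set X)) (hclop : ∀ W ∈ 𝓑, IsClopen W)
    (huniv : Set.univ ∈ 𝓑) (hempty : ∅ ∈ 𝓑)
    (hinter : ∀ A ∈ 𝓑, ∀ B ∈ 𝓑, A ∩ B ∈ 𝓑)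
    (hunion : ∀ A ∈ 𝓑, ∀ B ∈ 𝓑, A ∪ B ∈ 𝓑)
    (U : Set X) (hU : IsClopen U)
    (hsep : ∀ u ∈ U, ∀ v ∉ U, ∃ W ∈ 𝓑, u ∈ W ∧ v ∉ W) : U ∈ 𝓑 := by
  classical
  have hbInter : ∀ (t : Finset X) (f : X → Set X), (∀ v, f v ∈ 𝓑) →
      (⋂ v ∈ t, f v) ∈ 𝓑 := by
    intro t f hf
    induction t using Finset.induction_on with
    | empty => simpa using huniv
    | insert _ _ hx ih =>
        rw [Finset.set_biInter_insert]
        exact hinter _ (hf _) _ ih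
  have hbUnion : ∀ (t : Finset X) (f : X → Set X), (∀ v, f v ∈ 𝓑) →
      (⋃ v ∈ t, f v) ∈ 𝓑 := by
    intro t f hf
    induction t using Finset.induction_on with
    | empty => simpa using hempty
    | insert _ _ hx ih =>
        rw [Finset.set_biUnion_insert]
        exact hunion _ (hf _) _ ih
  -- Step 1: around each point of U there is a member of 𝓑 inside U
  have step1 : ∀ u ∈ U, ∃ W ∈ 𝓑, u ∈ W ∧ W ⊆ U := by
    intro u hu
    have hch : ∀ v : X, ∃ W, W ∈ 𝓑 ∧ u ∈ W ∧ (v ∉ U → v ∉ W) := by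
      intro v
      by_cases hv : v ∈ U
      · exact ⟨Set.univ, huniv, trivial, fun h => absurd hv h⟩
      · obtain ⟨W, hW, huW, hvW⟩ := hsep u hu v hv
        exact ⟨W, hW, huW, fun _ => hvW⟩
    choose f hf1 hf2 hf3 using hch
    have hcov : Uᶜ ⊆ ⋃ v : X, (f v)ᶜ := fun v hv => Set.mem_iUnion.2 ⟨v, hf3 v hv⟩
    have hcomp : IsCompact Uᶜ := hU.isOpen.isClosed_compl.isCompact
    obtain ⟨t, ht⟩ := hcomp.elim_finite_subcover (fun v => (f v)ᶜ)
      (fun v => (hclop _ (hf1 v)).compl.isOpen) hcov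
    refine ⟨⋂ v ∈ t, f v, hbInter t f hf1, Set.mem_biInter (fun v _ => hf2 v), ?_⟩
    intro x hx
    by_contra hxU
    obtain ⟨v, hvt, hvx⟩ := Set.mem_iUnion₂.1 (ht hxU)
    exact hvx (Set.mem_iInter₂.1 hx v hvt)
  -- Step 2: cover U by finitely many such sets
  have hch : ∀ u : X, ∃ W, W ∈ 𝓑 ∧ (u ∈ U → u ∈ W) ∧ W ⊆ U := by
    intro u
    by_cases hu : u ∈ U
    · obtain ⟨W, hW, huW, hWU⟩ := step1 u hu
      exact ⟨W, hW, fun _ => huW, hWU⟩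
    · exact ⟨∅, hempty, fun h => absurd h hu, empty_subset U⟩
  choose g hg1 hg2 hg3 using hch
  have hcov : U ⊆ ⋃ u : X, g u := fun u hu => Set.mem_iUnion.2 ⟨u, hg2 u hu⟩
  obtain ⟨t, ht⟩ := hU.isClosed.isCompact.elim_finite_subcover (fun u => g u)
    (fun u => (hclop _ (hg1 u)).isOpen) hcov
  have hUeq : U = ⋃ u ∈ t, g u := by
    apply subset_antisymm ht
    exact Set.iUnion₂_subset fun u _ => hg3 u
  rw [hUeq]
  exact hbUnion t g hg1

theorem stmt_12 {X : Type*} [TopologicalSpace X] [CompactSpace X]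
    (hbasis : TopologicalSpace.IsTopologicalBasis {U : Set X | IsClopen U})
    (D : Set X) (hD : Dense D)
    (𝓜 : Set (Set X)) (h𝓜 : ∀ L ∈ 𝓜, ∃ U : Set X, IsClopen U ∧ L = U ∩ D) :
    ((∅ ∈ 𝓜 ∧ D ∈ 𝓜 ∧ (∀ A ∈ 𝓜, ∀ B ∈ 𝓜, A ∪ B ∈ 𝓜 ∧ A ∩ B ∈ 𝓜) ∧
        (∀ A ∈ 𝓜, D \ A ∈ 𝓜)) ↔
      ∃ E : Set (X × X), (∀ p ∈ E, (p.2, p.1) ∈ E) ∧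
        ∀ L : Set X, (∃ U : Set X, IsClopen U ∧ L = U ∩ D) →
          (L ∈ 𝓜 ↔ ∀ p ∈ E, (p.1 ∈ closure L ↔ p.2 ∈ closure L))) := by
  have hcl : ∀ {U : Set X}, IsClopen U → closure (U ∩ D) = U :=
    fun hU => stmt12_closure hD hU
  have hcompl : ∀ U : Set X, Uᶜ ∩ D = D \ (U ∩ D) := by
    intro U; ext x; simp [mem_diff]; tauto
  constructor
  · rintro ⟨hempty, hDm, hui, hdiff⟩
    set 𝓑 : Set (Set X) := {W : Set X | IsClopen W ∧ W ∩ D ∈ 𝓜} with h𝓑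
    have hBempty : ∅ ∈ 𝓑 := ⟨isClopen_empty, by simpa using hempty⟩
    have hBuniv : Set.univ ∈ 𝓑 := ⟨isClopen_univ, by simpa using hDm⟩
    have hBinter : ∀ A ∈ 𝓑, ∀ B ∈ 𝓑, A ∩ B ∈ 𝓑 := by
      rintro A ⟨hA, hAm⟩ B ⟨hB, hBm⟩
      refine ⟨hA.inter hB, ?_⟩
      have : A ∩ B ∩ D = (A ∩ D) ∩ (B ∩ D) := by ext x; simp; tauto
      rw [this]; exact (hui _ hAm _ hBm).2
    have hBunion : ∀ A ∈ 𝓑, ∀ B ∈ 𝓑, A ∪ B ∈ 𝓑 := by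
      rintro A ⟨hA, hAm⟩ B ⟨hB, hBm⟩
      refine ⟨hA.union hB, ?_⟩
      have : (A ∪ B) ∩ D = (A ∩ D) ∪ (B ∩ D) := by ext x; simp; tauto
      rw [this]; exact (hui _ hAm _ hBm).1
    have hBcompl : ∀ A ∈ 𝓑, Aᶜ ∈ 𝓑 := by
      rintro A ⟨hA, hAm⟩
      exact ⟨hA.compl, by rw [hcompl A]; exact hdiff _ hAm⟩
    refine ⟨{p : X × X | ∀ W ∈ 𝓑, (p.1 ∈ W ↔ p.2 ∈ W)}, ?_, ?_⟩
    · intro p hp W hW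
      exact (hp W hW).symm
    · rintro L ⟨U, hU, rfl⟩
      rw [hcl hU]
      constructor
      · intro hLm p hp
        exact hp U ⟨hU, hLm⟩
      · intro hE
        have : U ∈ 𝓑 := by
          apply stmt12_key 𝓑 (fun W hW => hW.1) hBuniv hBempty hBinter hBunion U hU
          intro u hu v hv
          by_contra hno
          push_neg at hno
          have hpE : (u, v) ∈ {p : X × X | ∀ W ∈ 𝓑, (p.1 ∈ W ↔ p.2 ∈ W)} := by
            intro W hW
            constructor
            · intro huW
              by_contra hvW
              exact hvW (hno W hW huW)
            · intro hvW
              by_contra huW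
              have := hno Wᶜ (hBcompl W hW) huW
              exact this hvW
          exact hv ((hE (u, v) hpE).1 hu)
        exact this.2
  · rintro ⟨E, hEsymm, hE⟩
    have hmem : ∀ {U : Set X}, IsClopen U → ((U ∩ D) ∈ 𝓜 ↔ ∀ p ∈ E, (p.1 ∈ U ↔ p.2 ∈ U)) := by
      intro U hU
      have := hE (U ∩ D) ⟨U, hU, rfl⟩
      rwa [hcl hU] at this
    have hEm0 : (∅ : Set X) ∈ 𝓜 := by
      have := (hmem isClopen_empty).2 (fun p _ => by simp)
      simpa using this
    have hDD : D ∈ 𝓜 := by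
      have := (hmem isClopen_univ).2 (fun p _ => by simp)
      simpa using this
    refine ⟨hEm0, hDD, ?_, ?_⟩
    · intro A hA B hB
      obtain ⟨U, hU, rfl⟩ := h𝓜 A hA
      obtain ⟨V, hV, rfl⟩ := h𝓜 B hB
      have hAE := (hmem hU).1 hA
      have hBE := (hmem hV).1 hB
      constructor
      · have : (U ∩ D) ∪ (V ∩ D) = (U ∪ V) ∩ D := by ext x; simp; tauto
        rw [this]
        apply (hmem (hU.union hV)).2
        intro p hp
        have h1 := hAE p hp
        have h2 := hBE p hp
        simp only [mem_union]
        tauto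
      · have : (U ∩ D) ∩ (V ∩ D) = (U ∩ V) ∩ D := by ext x; simp; tauto
        rw [this]
        apply (hmem (hU.inter hV)).2
        intro p hp
        have h1 := hAE p hp
        have h2 := hBE p hp
        simp only [mem_inter_iff]
        tauto
    · intro A hA
      obtain ⟨U, hU, rfl⟩ := h𝓜 A hA
      have hAE := (hmem hU).1 hA
      rw [← hcompl U]
      apply (hmem hU.compl).2
      intro p hp
      have h1 := hAE p hp
      simp only [mem_compl_iff]
      tauto
end
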